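/- Infinity-norm fitting bound: if Q̂* is the maximizer of ∫ Q dc over functions in a shift-closed class 𝒞 satisfying Q ≤ F^M Q pointwise (c a probability measure), then ‖Q* − Q̂*‖_{1,c} ≤ (2/(1−γ^M))·inf_{Q ∈ 𝒞} ‖Q* − Q‖_∞. -/

import Mathlib

open MeasureTheory

theorem stmt10 {S : Type*} [MeasurableSpace S] [Nonempty S]
    (c : Measure S) [IsProbabilityMeasure c]
    (γ : ℝ) (hγ0 : 0 ≤ γ) (hγ1 : γ < 1) (M : ℕ) (hM : 1 ≤ M)
    (F : (S → ℝ) → (S → ℝ)) (Qstar : S → ℝ)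
    (hmono : ∀ Q₁ Q₂ : S → ℝ, (∀ s, Q₁ s ≤ Q₂ s) → ∀ s, F Q₁ s ≤ F Q₂ s)
    (hcontr : ∀ (Q₁ Q₂ : S → ℝ) (C : ℝ), (∀ s, |Q₁ s - Q₂ s| ≤ C) →
      ∀ s, |F Q₁ s - F Q₂ s| ≤ γ * C)
    (hfix : F Qstar = Qstar)
    (hshift : ∀ (Q' : S → ℝ) (β : ℝ) (s : S),
      F^[M] (fun t => Q' t + β) s = F^[M] Q' s + γ ^ M * β)
    (hunder : ∀ Q : S → ℝ, (∀ s, Q s ≤ F^[M] Q s) → ∀ s, Q s ≤ Qstar s)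
    (𝒞 : Set (S → ℝ)) (hne : 𝒞.Nonempty)
    (hclosed : ∀ Q ∈ 𝒞, ∀ β : ℝ, (fun s => Q s + β) ∈ 𝒞)
    (hintQ : ∀ Q ∈ 𝒞, Integrable Q c) (hintQs : Integrable Qstar c)
    (hbdd : ∀ Q ∈ 𝒞, BddAbove (Set.range fun s => |Qstar s - Q s|))
    (Qhat : S → ℝ) (hQhat𝒞 : Qhat ∈ 𝒞) (hQhatfeas : ∀ s, Qhat s ≤ F^[M] Qhat s)
    (hmax : ∀ Q ∈ 𝒞, (∀ s, Q s ≤ F^[M] Q s) → ∫ s, Q s ∂c ≤ ∫ s, Qhat s ∂c) :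
    ∫ s, (Qstar s - Qhat s) ∂c ≤
      (2 / (1 - γ ^ M)) * ⨅ Q : 𝒞, ⨆ s, |Qstar s - Q.1 s| := by
  have hγM1 : γ ^ M < 1 := pow_lt_one₀ hγ0 hγ1 (by omega)
  have hγM0 : 0 ≤ γ ^ M := pow_nonneg hγ0 M
  have hd0 : 0 < 1 - γ ^ M := by linarith
  have h2d : 0 < 2 / (1 - γ ^ M) := by positivity
  have hiter : ∀ (n : ℕ) (Q₁ Q₂ : S → ℝ) (C : ℝ), (∀ s, |Q₁ s - Q₂ s| ≤ C) →
      ∀ s, |F^[n] Q₁ s - F^[n] Q₂ s| ≤ γ ^ n * C := by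
    intro n
    induction n with
    | zero => intro Q₁ Q₂ C h s; simpa using h s
    | succ n ih =>
      intro Q₁ Q₂ C h s
      rw [Function.iterate_succ_apply', Function.iterate_succ_apply']
      calc |F (F^[n] Q₁) s - F (F^[n] Q₂) s| ≤ γ * (γ ^ n * C) :=
            hcontr _ _ _ (ih Q₁ Q₂ C h) s
        _ = γ ^ (n + 1) * C := by ring
  have hfixM : F^[M] Qstar = Qstar := Function.iterate_fixed hfix M
  have hintQhat : Integrable Qhat c := hintQ Qhat hQhat𝒞
  have key : ∀ Q ∈ 𝒞, ∫ s, (Qstar s - Qhat s) ∂c ≤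
      (2 / (1 - γ ^ M)) * ⨆ s, |Qstar s - Q s| := by
    intro Q hQ
    set ε := ⨆ s, |Qstar s - Q s| with hε
    have hbd := hbdd Q hQ
    have hεle : ∀ s, |Qstar s - Q s| ≤ ε := fun s => le_ciSup hbd s
    have hε0 : 0 ≤ ε := le_trans (abs_nonneg _) (hεle (Classical.arbitrary S))
    set β := (1 + γ ^ M) * ε / (1 - γ ^ M) with hβ
    have hdβ : (1 - γ ^ M) * β = (1 + γ ^ M) * ε := by
      rw [hβ]; field_simp
    set Q' := fun s => Q s + (-β) with hQ'def
    have hQ'𝒞 : Q' ∈ 𝒞 := hclosed Q hQ (-β)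
    have hfeas : ∀ s, Q' s ≤ F^[M] Q' s := by
      intro s
      have hsh : F^[M] Q' s = F^[M] Q s + γ ^ M * (-β) := hshift Q (-β) s
      have h1 : |F^[M] Q s - Qstar s| ≤ γ ^ M * ε := by
        have := hiter M Q Qstar ε (fun t => by rw [abs_sub_comm]; exact hεle t) s
        rwa [hfixM] at this
      have h1' := abs_le.mp h1
      have h2 := abs_le.mp (hεle s)
      show Q s + (-β) ≤ F^[M] Q' s
      rw [hsh]
      nlinarith [h1'.1, h1'.2, h2.1, h2.2]
    have hmaxQ' := hmax Q' hQ'𝒞 hfeas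
    have hIQ' : ∫ s, Q' s ∂c = ∫ s, Q s ∂c - β := by
      rw [hQ'def, integral_add (hintQ Q hQ) (integrable_const _), integral_const]
      simp [sub_eq_add_neg]
    have hmono2 : ∫ s, (Qstar s - Q s) ∂c ≤ ε := by
      calc ∫ s, (Qstar s - Q s) ∂c ≤ ∫ _s, ε ∂c := by
            apply integral_mono (hintQs.sub (hintQ Q hQ)) (integrable_const _)
            intro s
            exact le_trans (le_abs_self _) (hεle s)
        _ = ε := by simp
    have hsub1 : ∫ s, (Qstar s - Qhat s) ∂c = ∫ s, Qstar s ∂c - ∫ s, Qhat s ∂c :=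
      integral_sub hintQs hintQhat
    have hsub2 : ∫ s, (Qstar s - Q s) ∂c = ∫ s, Qstar s ∂c - ∫ s, Q s ∂c :=
      integral_sub hintQs (hintQ Q hQ)
    have hfinal : ε + β = (2 / (1 - γ ^ M)) * ε := by
      rw [hβ]; field_simp; ring
    rw [hIQ'] at hmaxQ'
    linarith
  have hI : (∫ s, (Qstar s - Qhat s) ∂c) / (2 / (1 - γ ^ M)) ≤
      ⨅ Q : 𝒞, ⨆ s, |Qstar s - Q.1 s| := by
    haveI : Nonempty 𝒞 := hne.to_subtype
    apply le_ciInf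
    intro Q
    rw [div_le_iff₀ h2d, mul_comm]
    exact key Q.1 Q.2
  calc ∫ s, (Qstar s - Qhat s) ∂c
      = (2 / (1 - γ ^ M)) * ((∫ s, (Qstar s - Qhat s) ∂c) / (2 / (1 - γ ^ M))) := by
        field_simp
    _ ≤ (2 / (1 - γ ^ M)) * ⨅ Q : 𝒞, ⨆ s, |Qstar s - Q.1 s| := by
        exact mul_le_mul_of_nonneg_left hI h2d.le
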